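/- In the same setting, b† acts as a lowering operator on the biorthogonal sequence: b† η_n = √ε_n η_{n-1} for all n ≥ 1, and a† as a raising operator: a† η_n = √ε_{n+1} η_{n+1}. -/

import Mathlib

local notation "⟪" x ", " y "⟫" => @inner ℂ _ _ x y

lemma stmt18_ext {H : Type*} [NormedAddCommGroup H] [InnerProductSpace ℂ H]
    (Φ : ℕ → H)
    (hdense : Dense ((Submodule.span ℂ (Set.range Φ) : Submodule ℂ H) : Set H))
    (x y : H) (h : ∀ k : ℕ, ⟪x, Φ k⟫ = ⟪y, Φ k⟫) : x = y := by
  refine hdense.eq_of_inner_left ℂ fun v hv => ?_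
  change v ∈ Submodule.span ℂ (Set.range Φ) at hv
  induction hv using Submodule.span_induction with
  | mem z hz => obtain ⟨k, rfl⟩ := hz; exact h k
  | zero => simp
  | add z w _ _ hz hw => simp [inner_add_right, hz, hw]
  | smul c z _ hz => simp [inner_smul_right, hz]

/-- `b†` lowers and `a†` raises the biorthogonal sequence:
`b† η n = √ε_n η_{n-1}` for `n ≥ 1` and `a† η n = √ε_{n+1} η_{n+1}`. -/
theorem stmt18 {H : Type*} [NormedAddCommGroup H] [InnerProductSpace ℂ H]
    [CompleteSpace H] (a b ad bd : H →ₗ[ℂ] H) (Φ η : ℕ → H) (ε : ℕ → ℝ)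
    (hε0 : ε 0 = 0) (hmono : StrictMono ε)
    (hadja : ∀ x y : H, ⟪a x, y⟫ = ⟪x, ad y⟫)
    (hadjb : ∀ x y : H, ⟪b x, y⟫ = ⟪x, bd y⟫)
    (haΦ0 : a (Φ 0) = 0)
    (haΦ : ∀ k : ℕ, 1 ≤ k → a (Φ k) = (Real.sqrt (ε k) : ℂ) • Φ (k - 1))
    (hbΦ : ∀ k : ℕ, b (Φ k) = (Real.sqrt (ε (k + 1)) : ℂ) • Φ (k + 1))
    (hbo : ∀ n m : ℕ, ⟪η n, Φ m⟫ = if n = m then (1 : ℂ) else 0)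
    (hdense : Dense ((Submodule.span ℂ (Set.range Φ) : Submodule ℂ H) : Set H)) :
    (∀ n : ℕ, 1 ≤ n → bd (η n) = (Real.sqrt (ε n) : ℂ) • η (n - 1)) ∧
    (∀ n : ℕ, ad (η n) = (Real.sqrt (ε (n + 1)) : ℂ) • η (n + 1)) := by
  have key : ∀ (x : H) (k : ℕ), ⟪x, Φ k⟫ = (starRingEnd ℂ) ⟪Φ k, x⟫ := fun x k =>
    (inner_conj_symm _ _).symm
  constructor
  · intro n hn
    refine stmt18_ext Φ hdense _ _ fun k => ?_
    have L : ⟪bd (η n), Φ k⟫ = ⟪η n, b (Φ k)⟫ := by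
      rw [key, ← hadjb, inner_conj_symm]
    rw [L, hbΦ, inner_smul_right, hbo, inner_smul_left, hbo, Complex.conj_ofReal]
    rcases eq_or_ne n (k + 1) with h | h
    · rw [if_pos h, if_pos (by omega), h]
    · rw [if_neg h, if_neg (by omega)]
      simp
  · intro n
    refine stmt18_ext Φ hdense _ _ fun k => ?_
    have L : ⟪ad (η n), Φ k⟫ = ⟪η n, a (Φ k)⟫ := by
      rw [key, ← hadja, inner_conj_symm]
    rw [L, inner_smul_left, hbo, Complex.conj_ofReal]
    rcases Nat.eq_zero_or_pos k with rfl | hk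
    · rw [haΦ0, if_neg (by omega)]
      simp
    · rw [haΦ k hk, inner_smul_right, hbo]
      rcases eq_or_ne n (k - 1) with h | h
      · rw [if_pos h, if_pos (by omega)]
        have : k = n + 1 := by omega
        rw [this]
      · rw [if_neg h, if_neg (by omega)]
        simp
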